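/- Suppose that for every positive integer n, n·1_R is not a zero divisor in R. If p ∈ R[X_1,…,X_N] is harmonic (Δp = 0) and p is a multiple of X·X (i.e., p = (X·X)·q for some q ∈ R[X_1,…,X_N]), then p = 0. -/

import Mathlib

open MvPolynomial

/-- The rotation generator `M_{jk} p = X_j ∂_k p − X_k ∂_j p`. -/
noncomputable def rot {R : Type*} [CommRing R] {N : ℕ} (j k : Fin N)
    (p : MvPolynomial (Fin N) R) : MvPolynomial (Fin N) R :=
  X j * pderiv k p - X k * pderiv j p

/-- The Laplacian `Δ p = Σ_j ∂_j² p`. -/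
noncomputable def lap {R : Type*} [CommRing R] {N : ℕ}
    (p : MvPolynomial (Fin N) R) : MvPolynomial (Fin N) R :=
  ∑ j, pderiv j (pderiv j p)

/-- The polynomial `X·X = X_1² + ⋯ + X_N²`. -/
noncomputable def XX (R : Type*) [CommRing R] (N : ℕ) : MvPolynomial (Fin N) R :=
  ∑ j, X j ^ 2

open Finsupp

section Aux

variable {R : Type*} [CommRing R] {N : ℕ}


lemma pderiv_comm' (i j : Fin N) (p : MvPolynomial (Fin N) R) :
    pderiv i (pderiv j p) = pderiv j (pderiv i p) := by
  induction p using MvPolynomial.induction_on' with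
  | monomial u a =>
    rcases eq_or_ne i j with rfl | hij
    · rfl
    · simp only [pderiv_monomial]
      rw [tsub_tsub, tsub_tsub, add_comm (Finsupp.single j 1)]
      congr 1
      rw [Finsupp.tsub_apply, Finsupp.tsub_apply,
        Finsupp.single_eq_of_ne' hij, Finsupp.single_eq_of_ne' (Ne.symm hij)]
      push_cast [Nat.sub_zero]
      ring
  | add p q hp hq => simp [map_add, hp, hq]

noncomputable def eul (p : MvPolynomial (Fin N) R) : MvPolynomial (Fin N) R :=
  ∑ j, X j * pderiv j p

lemma eul_monomial (u : Fin N →₀ ℕ) (a : R) :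
    eul (monomial u a) = (∑ j, u j) • monomial u a := by
  rw [eul, Finset.sum_smul]
  refine Finset.sum_congr rfl fun j _ => ?_
  rcases Nat.eq_zero_or_pos (u j) with h | h
  · simp [pderiv_monomial, h]
  · rw [pderiv_monomial, X, monomial_mul, one_mul, smul_monomial]
    congr 1
    · rw [add_comm, tsub_add_cancel_of_le]
      exact Finsupp.single_le_iff.mpr h
    · rw [nsmul_eq_mul, mul_comm]

lemma eul_add (p q : MvPolynomial (Fin N) R) : eul (p + q) = eul p + eul q := by
  simp [eul, map_add, mul_add, Finset.sum_add_distrib]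

lemma coeff_eul (m : Fin N →₀ ℕ) (p : MvPolynomial (Fin N) R) :
    coeff m (eul p) = (∑ j, m j) • coeff m p := by
  induction p using MvPolynomial.induction_on' with
  | monomial u a =>
    rw [eul_monomial, coeff_smul]
    classical
    rcases eq_or_ne u m with rfl | h
    · rfl
    · simp [coeff_monomial, h]
  | add p q hp hq => simp [eul_add, hp, hq, mul_add]

lemma eul_key {s : MvPolynomial (Fin N) R}
    (hR : ∀ n : ℕ, 0 < n → (n : R) ∈ nonZeroDivisors R)
    (a c : ℕ) (ha : 0 < a) (hc : 0 < c)
    (h : a • eul s + c • s = 0) : s = 0 := by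
  ext m
  have h2 := congrArg (coeff m) h
  rw [coeff_add, coeff_smul, coeff_smul, coeff_eul, coeff_zero, smul_smul] at h2
  have h3 : ((a * ∑ j, m j + c : ℕ) : R) * coeff m s = 0 := by
    rw [nsmul_eq_mul, nsmul_eq_mul] at h2
    push_cast at h2 ⊢
    linear_combination h2
  have h4 := hR (a * ∑ j, m j + c) (by positivity)
  rw [coeff_zero]
  exact h4.2 _ (by rw [mul_comm] at h3; exact h3)

lemma lap_add (p q : MvPolynomial (Fin N) R) : lap (p + q) = lap p + lap q := by
  simp [lap, map_add, Finset.sum_add_distrib]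

lemma lap_nsmul (n : ℕ) (p : MvPolynomial (Fin N) R) : lap (n • p) = n • lap p := by
  simp [lap, map_nsmul, Finset.smul_sum]

lemma lap_zero : lap (0 : MvPolynomial (Fin N) R) = 0 := by simp [lap]

lemma pderiv_XX (j : Fin N) : pderiv j (XX R N) = 2 * X j := by
  classical
  rw [XX, map_sum]
  rw [Finset.sum_eq_single j]
  · rw [pderiv_pow, pderiv_X_self]
    ring
  · intro i _ hij
    rw [pderiv_pow, pderiv_X_of_ne hij, mul_zero]
  · simp

lemma lap_XX_mul (s : MvPolynomial (Fin N) R) :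
    lap (XX R N * s) = XX R N * lap s + 4 • eul s + (2 * N) • s := by
  have h : ∀ j : Fin N, pderiv j (pderiv j (XX R N * s)) =
      XX R N * pderiv j (pderiv j s) + 4 • (X j * pderiv j s) + 2 • s := by
    intro j
    have h2 : pderiv j (2 : MvPolynomial (Fin N) R) = 0 := by
      have : (2 : MvPolynomial (Fin N) R) = C 2 := (map_ofNat C 2).symm
      rw [this, pderiv_C]
    rw [pderiv_mul, pderiv_XX, map_add, pderiv_mul, pderiv_mul, pderiv_mul, pderiv_XX,
      pderiv_X_self, h2]
    simp only [nsmul_eq_mul]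
    push_cast
    ring
  rw [lap, Finset.sum_congr rfl (fun j _ => h j), Finset.sum_add_distrib,
    Finset.sum_add_distrib, ← Finset.mul_sum, ← Finset.smul_sum, Finset.sum_const,
    Finset.card_fin, ← lap, ← eul, smul_smul, mul_comm 2 N]

lemma lap_eul (s : MvPolynomial (Fin N) R) :
    lap (eul s) = eul (lap s) + 2 • lap s := by
  classical
  have h : ∀ j : Fin N, (∑ k : Fin N, pderiv k (pderiv k (X j * pderiv j s))) =
      2 • pderiv j (pderiv j s) + X j * pderiv j (lap s) := by
    intro j
    have hterm : ∀ k : Fin N, pderiv k (pderiv k (X j * pderiv j s)) =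
        2 • (pderiv k (X j) * pderiv j (pderiv k s)) +
          X j * pderiv j (pderiv k (pderiv k s)) := by
      intro k
      have hc : pderiv k (pderiv k (X j : MvPolynomial (Fin N) R)) = 0 := by
        rcases eq_or_ne j k with rfl | hjk
        · rw [pderiv_X_self, pderiv_one]
        · rw [pderiv_X_of_ne hjk, map_zero]
      rw [pderiv_mul, map_add, pderiv_mul, pderiv_mul, hc, pderiv_comm' k j s,
        pderiv_comm' k j (pderiv k s), two_nsmul]
      ring
    rw [Finset.sum_congr rfl (fun k _ => hterm k), Finset.sum_add_distrib,
      ← Finset.mul_sum, ← map_sum (pderiv j) (fun k => pderiv k (pderiv k s)) Finset.univ, ← lap, ← Finset.smul_sum]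
    congr 2
    rw [Finset.sum_eq_single j]
    · rw [pderiv_X_self, one_mul]
    · intro k _ hkj
      rw [pderiv_X_of_ne (Ne.symm hkj), zero_mul]
    · simp
  calc lap (eul s) = ∑ j : Fin N, ∑ k : Fin N, pderiv k (pderiv k (X j * pderiv j s)) := by
        rw [lap, eul]
        rw [Finset.sum_comm]
        refine Finset.sum_congr rfl fun k _ => ?_
        rw [← map_sum, ← map_sum]
    _ = eul (lap s) + 2 • lap s := by
        rw [Finset.sum_congr rfl (fun j _ => h j), Finset.sum_add_distrib, ← eul,
          ← Finset.smul_sum, ← lap, add_comm]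

lemma totalDegree_pderiv_le' (i : Fin N) (p : MvPolynomial (Fin N) R) :
    (pderiv i p).totalDegree ≤ p.totalDegree - 1 := by
  conv_lhs => rw [p.as_sum]
  rw [map_sum]
  refine (totalDegree_finset_sum _ _).trans (Finset.sup_le fun u hu => ?_)
  rw [pderiv_monomial]
  rcases Nat.eq_zero_or_pos (u i) with h | h
  · simp [h]
  · refine (totalDegree_monomial_le _ _).trans ?_
    simp only [Function.id_def]
    have hle : Finsupp.single i 1 ≤ u := Finsupp.single_le_iff.mpr h
    have hsum : u.sum (fun _ e => e) =
        (u - Finsupp.single i 1).sum (fun _ e => e) + 1 := by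
      conv_lhs => rw [← tsub_add_cancel_of_le hle]
      rw [Finsupp.sum_add_index' (fun _ => rfl) (fun _ _ _ => rfl),
        Finsupp.sum_single_index rfl]
    have := le_totalDegree hu
    omega

lemma pderiv_eq_zero_of_deg0 (i : Fin N) {p : MvPolynomial (Fin N) R}
    (h : p.totalDegree = 0) : pderiv i p = 0 := by
  conv_lhs => rw [p.as_sum]
  rw [map_sum]
  refine Finset.sum_eq_zero fun u hu => ?_
  have h1 : u.sum (fun _ e => e) = 0 := Nat.le_zero.mp (h ▸ le_totalDegree hu)
  have h2 : u i = 0 := by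
    by_contra hne
    have hmem : i ∈ u.support := Finsupp.mem_support_iff.mpr hne
    have := Finset.single_le_sum (f := fun a => u a) (fun _ _ => Nat.zero_le _) hmem
    beta_reduce at this
    have h3 : u.sum (fun _ e => e) = ∑ a ∈ u.support, u a := rfl
    omega
  rw [pderiv_monomial, h2]
  simp

lemma lap_totalDegree_le (p : MvPolynomial (Fin N) R) :
    (lap p).totalDegree ≤ p.totalDegree - 2 := by
  rw [lap]
  refine (totalDegree_finset_sum _ _).trans (Finset.sup_le fun j _ => ?_)
  calc (pderiv j (pderiv j p)).totalDegree ≤ (pderiv j p).totalDegree - 1 :=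
        totalDegree_pderiv_le' _ _
    _ ≤ (p.totalDegree - 1) - 1 := Nat.sub_le_sub_right (totalDegree_pderiv_le' _ _) 1
    _ = p.totalDegree - 2 := by omega

lemma lap_iterate_eq_zero :
    ∀ (n : ℕ) (p : MvPolynomial (Fin N) R), p.totalDegree ≤ n → lap^[n + 1] p = 0 := by
  intro n
  induction n with
  | zero =>
    intro p hp
    rw [Function.iterate_one, lap]
    refine Finset.sum_eq_zero fun j _ => ?_
    rw [pderiv_eq_zero_of_deg0 j (Nat.le_zero.mp hp), map_zero]
  | succ n ih =>
    intro p hp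
    rw [Function.iterate_succ_apply]
    refine ih (lap p) ?_
    have := lap_totalDegree_le p
    omega

end Aux

/-- if positive integer multiples of `1_R` are not zero divisors, the only
harmonic multiple of `X·X` is `0`. -/
theorem stmt4 {R : Type*} [CommRing R] {N : ℕ} (hN : 2 ≤ N)
    (hR : ∀ n : ℕ, 0 < n → (n : R) ∈ nonZeroDivisors R)
    (p : MvPolynomial (Fin N) R) (hharm : lap p = 0)
    (hdvd : ∃ q : MvPolynomial (Fin N) R, p = XX R N * q) :
    p = 0 := by
  obtain ⟨q, rfl⟩ := hdvd
  suffices hq : q = 0 by rw [hq, mul_zero]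
  have key : ∀ k : ℕ, XX R N * lap (lap^[k] q) + (4 * (k + 1)) • eul (lap^[k] q)
      + (2 * (k + 1) * N + 4 * k * (k + 1)) • (lap^[k] q) = 0 := by
    intro k
    induction k with
    | zero =>
      rw [lap_XX_mul] at hharm
      simp only [Function.iterate_zero, id_eq]
      convert hharm using 2
      simp
    | succ k ih =>
      have h2 := congrArg lap ih
      rw [lap_add, lap_add, lap_XX_mul, lap_nsmul, lap_nsmul, lap_eul, lap_zero] at h2
      rw [Function.iterate_succ_apply' lap k q]
      simp only [nsmul_eq_mul] at h2 ⊢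
      push_cast at h2 ⊢
      linear_combination h2
  have hstep : ∀ k : ℕ, lap^[k + 1] q = 0 → lap^[k] q = 0 := by
    intro k hk
    have h := key k
    rw [← Function.iterate_succ_apply' lap k q, hk, mul_zero, zero_add] at h
    refine eul_key hR _ _ (by positivity) ?_ h
    have hN0 : 0 < N := by omega
    positivity
  have hdesc : ∀ m k : ℕ, lap^[k + m] q = 0 → lap^[k] q = 0 := by
    intro m
    induction m with
    | zero => intro k h; simpa using h
    | succ m ih =>
      intro k h
      refine hstep k (ih (k + 1) ?_)
      rw [show k + 1 + m = k + (m + 1) by omega]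
      exact h
  have h0 : lap^[q.totalDegree + 1] q = 0 := lap_iterate_eq_zero _ q le_rfl
  simpa using hdesc (q.totalDegree + 1) 0 (by simpa using h0)
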